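/- For every signal f, MTL formulas φ1 and φ2, and nonempty bounded interval I of nonnegative reals with inf I > 0, there exist four intervals T1, T2, T3, T4 ⊆ ℝ≥0 such that: (a) for all i < j in {1,2,3,4} and all ti ∈ Ti, tj ∈ Tj, ti < tj; and (b) for all t ∈ ℝ≥0, (t < Step(I) and f^t ⊨ φ1 R_I φ2 under the new satisfaction relation) if and only if t ∈ T1 ∪ T2 ∪ T3 ∪ T4. -/

import Mathlib

open scoped NNReal ENNReal
open Set

namespace MITL

/-- A signal assigns to each nonnegative real time the set of atomic
propositions true at that time. -/
abbrev Signal (AP : Type*) := ℝ≥0 → Set AP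

/-- The shifted signal `f^r`, defined by `f^r(t) = f(r+t)`. -/
def shift {AP : Type*} (f : Signal AP) (r : ℝ≥0) : Signal AP := fun t => f (r + t)

/-- MTL formulas over atomic propositions `AP`; the timing constraints are
(intended to be) intervals of nonnegative reals. -/
inductive MTL (AP : Type*) where
  | top : MTL AP
  | bot : MTL AP
  | atom : AP → MTL AP
  | neg : MTL AP → MTL AP
  | disj : MTL AP → MTL AP → MTL AP
  | conj : MTL AP → MTL AP → MTL AP
  | until_ : MTL AP → MTL AP → Set ℝ≥0 → MTL AP
  | release : MTL AP → MTL AP → Set ℝ≥0 → MTL AP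

variable {AP : Type*}

/-- The NEW satisfaction relation: `NSat f φ` means `f ⊨ φ`. -/
def NSat : Signal AP → MTL AP → Prop
  | _, .top => True
  | _, .bot => False
  | f, .atom p => p ∈ f 0
  | f, .neg φ => ¬ NSat f φ
  | f, .disj φ1 φ2 => NSat f φ1 ∨ NSat f φ2
  | f, .conj φ1 φ2 => NSat f φ1 ∧ NSat f φ2
  | f, .until_ φ1 φ2 I =>
      ∃ t1 ∈ I, NSat (shift f t1) φ2 ∧ ∀ t2 ∈ Set.Ioo 0 t1, NSat (shift f t2) φ1
  | f, .release φ1 φ2 I =>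
      (∀ t1 ∈ I, NSat (shift f t1) φ2) ∨
      (∃ t1 : ℝ≥0, 0 < t1 ∧ NSat (shift f t1) φ1 ∧
        ∀ t2 ∈ Set.Ioc 0 t1 ∩ I, NSat (shift f t2) φ2) ∨
      (∃ t1 ∈ I ∪ {sInf I}, ∃ t2 ∈ I, t1 < t2 ∧
        ∀ t3 ∈ I, (t3 ≤ t1 → NSat (shift f t3) φ2) ∧
          (t1 < t3 → t3 ≤ t2 → NSat (shift f t3) φ1))

/-- Finite variability from the right of a signal `f` with respect to a formula
`φ`, relative to a satisfaction relation `Sat`. -/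
def FinVarRight (Sat : Signal AP → MTL AP → Prop) (f : Signal AP) (φ : MTL AP) : Prop :=
  ∀ r : ℝ≥0,
    (∀ ε : ℝ≥0, 0 < ε → ∃ t ∈ Set.Ioo r (r + ε), Sat (shift f t) φ) →
    ∃ ε : ℝ≥0, 0 < ε ∧ ∀ t ∈ Set.Ioo r (r + ε), Sat (shift f t) φ

/-- Finite variability from the left of a signal `f` with respect to a formula
`φ`, relative to a satisfaction relation `Sat`. -/
def FinVarLeft (Sat : Signal AP → MTL AP → Prop) (f : Signal AP) (φ : MTL AP) : Prop :=
  ∀ r : ℝ≥0, 0 < r →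
    (∀ ε ∈ Set.Ioo 0 r, ∃ t ∈ Set.Ioo (r - ε) r, Sat (shift f t) φ) →
    ∃ ε ∈ Set.Ioo 0 r, ∀ t ∈ Set.Ioo (r - ε) r, Sat (shift f t) φ

open Classical in
/-- The step size of a (bounded nonempty) interval. -/
noncomputable def Step (I : Set ℝ≥0) : ℝ≥0 :=
  if sSup I - sInf I < sInf I then sSup I - sInf I else sInf I

lemma shift_shift (f : Signal AP) (r s : ℝ≥0) : shift (shift f r) s = shift f (r + s) := by
  funext t; simp [shift, add_assoc]

lemma nsat_release_iff (f : Signal AP) (φ1 φ2 : MTL AP) (I : Set ℝ≥0) (t : ℝ≥0) :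
    NSat (shift f t) (.release φ1 φ2 I) ↔
      (∀ s ∈ I, NSat (shift f (t + s)) φ2) ∨
      (∃ t1 : ℝ≥0, 0 < t1 ∧ NSat (shift f (t + t1)) φ1 ∧
        ∀ u ∈ Set.Ioc 0 t1 ∩ I, NSat (shift f (t + u)) φ2) ∨
      (∃ s1 ∈ I ∪ {sInf I}, ∃ s2 ∈ I, s1 < s2 ∧ ∀ s3 ∈ I,
        (s3 ≤ s1 → NSat (shift f (t + s3)) φ2) ∧
        (s1 < s3 → s3 ≤ s2 → NSat (shift f (t + s3)) φ1)) := by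
  simp only [NSat, shift_shift]

/-- bad points of the window at `n`: relative times in `I` where `φ2` fails. -/
def Bad (f : Signal AP) (φ2 : MTL AP) (I : Set ℝ≥0) (n : ℝ≥0) : Set ℝ≥0 :=
  {s | s ∈ I ∧ ¬ NSat (shift f (n + s)) φ2}

section Facts

variable {f : Signal AP} {φ1 φ2 : MTL AP} {I : Set ℝ≥0}

lemma bad_nonempty {n : ℝ≥0} (hn : ¬ NSat (shift f n) (.release φ1 φ2 I)) :
    (Bad f φ2 I n).Nonempty := by
  rw [nsat_release_iff] at hn
  push_neg at hn
  obtain ⟨s, hs, h⟩ := hn.1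
  exact ⟨s, hs, h⟩

lemma inf_le_sInf_bad {n : ℝ≥0} (hn : ¬ NSat (shift f n) (.release φ1 φ2 I)) :
    sInf I ≤ sInf (Bad f φ2 I n) :=
  le_csInf (bad_nonempty hn) fun s hs => csInf_le (OrderBot.bddBelow I) hs.1

lemma notB_fact {n : ℝ≥0} (hn : ¬ NSat (shift f n) (.release φ1 φ2 I)) {w : ℝ≥0}
    (hw : n < w) (hH : NSat (shift f w) φ1) :
    ∃ u ∈ Bad f φ2 I n, n + u ≤ w := by
  rw [nsat_release_iff] at hn
  push_neg at hn
  have h1 : (0:ℝ≥0) < w - n := by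
    rw [tsub_pos_iff_lt]; exact hw
  have h2 := hn.2.1 (w - n) h1
  rw [add_tsub_cancel_of_le hw.le] at h2
  obtain ⟨u, ⟨⟨hu0, hu2⟩, huI⟩, hub⟩ := h2 hH
  exact ⟨u, ⟨huI, hub⟩, (le_tsub_iff_left hw.le).mp hu2⟩

lemma N3_fact (hne : I.Nonempty) (hI : I.OrdConnected)
    {n : ℝ≥0} (hn : ¬ NSat (shift f n) (.release φ1 φ2 I))
    (hσ : sInf (Bad f φ2 I n) ∉ Bad f φ2 I n)
    {u2 : ℝ≥0} (hu2 : u2 ∈ I) (hlt : sInf (Bad f φ2 I n) < u2) :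
    ∃ u3 ∈ I, sInf (Bad f φ2 I n) < u3 ∧ u3 ≤ u2 ∧ ¬ NSat (shift f (n + u3)) φ1 := by
  set σ := sInf (Bad f φ2 I n) with hσdef
  have hσmem : σ ∈ I ∪ {sInf I} := by
    rcases eq_or_lt_of_le (inf_le_sInf_bad hn) with h | h
    · right; simp [hσdef, ← h]
    · left
      obtain ⟨z, hz, hzσ⟩ := exists_lt_of_csInf_lt hne h
      obtain ⟨s, hs⟩ := bad_nonempty hn
      exact hI.out hz hs.1 ⟨hzσ.le, csInf_le (OrderBot.bddBelow _) hs⟩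
  rw [nsat_release_iff] at hn
  push_neg at hn
  obtain ⟨u3, hu3I, hbad⟩ := hn.2.2 σ hσmem u2 hu2 hlt
  have hante : u3 ≤ σ → NSat (shift f (n + u3)) φ2 := by
    intro hle
    by_contra hg
    exact hσ (le_antisymm hle (csInf_le (OrderBot.bddBelow _) ⟨hu3I, hg⟩) ▸ (⟨hu3I, hg⟩ : u3 ∈ Bad f φ2 I n))
  obtain ⟨h1, h2, h3⟩ := hbad hante
  exact ⟨u3, hu3I, h1, h2, h3⟩

lemma mem_shift (hne : I.Nonempty) (hI : I.OrdConnected) {x n s : ℝ≥0} (hs : s ∈ I)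
    (hlow : x + sInf I < n + s) (hhigh : n + s < x + sSup I) :
    ∃ s', s' ∈ I ∧ sInf I < s' ∧ x + s' = n + s := by
  have hx : x ≤ n + s := le_trans le_self_add hlow.le
  have heq : x + (n + s - x) = n + s := add_tsub_cancel_of_le hx
  have hlow' : sInf I < n + s - x := by
    have : x + sInf I < x + (n + s - x) := by rw [heq]; exact hlow
    exact lt_of_add_lt_add_left this
  have hhigh' : n + s - x < sSup I := by
    rw [tsub_lt_iff_left hx]
    exact hhigh
  obtain ⟨z, hz, hz'⟩ := exists_lt_of_csInf_lt hne hlow'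
  obtain ⟨y, hy, hy'⟩ := exists_lt_of_lt_csSup hne hhigh'
  exact ⟨n + s - x, hI.out hz hy ⟨hz'.le, hy'.le⟩, hlow', heq⟩


lemma C_endgame (hne : I.Nonempty) (hI : I.OrdConnected) (hinf : 0 < sInf I)
    (hbdd : BddAbove I) {n x t1 t2 : ℝ≥0}
    (hn : ¬ NSat (shift f n) (.release φ1 φ2 I))
    (hσ : sInf (Bad f φ2 I n) ∉ Bad f φ2 I n)
    (ht1a : sInf I ≤ t1) (ht2 : t2 ∈ I) (hlt : t1 < t2)
    (heq : x + t1 = n + sInf (Bad f φ2 I n))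
    (hcond : ∀ s3 ∈ I, (s3 ≤ t1 → NSat (shift f (x + s3)) φ2) ∧
      (t1 < s3 → s3 ≤ t2 → NSat (shift f (x + s3)) φ1)) : False := by
  set σ := sInf (Bad f φ2 I n) with hσdef
  -- σ < sSup I
  have hσb : σ < sSup I := by
    obtain ⟨sb, hsb⟩ := bad_nonempty hn
    have h1 : σ ≤ sb := csInf_le (OrderBot.bddBelow _) hsb
    have h2 : sb ≤ sSup I := le_csSup hbdd hsb.1
    rcases lt_or_eq_of_le (h1.trans h2) with h | h
    · exact h
    · exact absurd (le_antisymm h1 (h2.trans h.ge) ▸ hsb) hσ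
  have hσt2 : σ < (x + t2) - n := by
    rw [lt_tsub_iff_left]
    calc n + σ = x + t1 := heq.symm
    _ < x + t2 := (add_lt_add_iff_left x).mpr hlt
  obtain ⟨r, hr1, hr2⟩ := exists_between (lt_min hσt2 hσb)
  have hrI : r ∈ I := by
    obtain ⟨z, hz, hz'⟩ := exists_lt_of_csInf_lt hne ((inf_le_sInf_bad hn).trans_lt hr1)
    obtain ⟨y, hy, hy'⟩ := exists_lt_of_lt_csSup hne (hr2.trans_le (min_le_right _ _))
    exact hI.out hz hy ⟨hz'.le, hy'.le⟩
  obtain ⟨u3, hu3I, hσu3, hu3r, hu3H⟩ := N3_fact hne hI hn hσ hrI hr1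
  have hq1 : x + t1 < n + u3 := by rw [heq]; exact (add_lt_add_iff_left n).mpr hσu3
  have hq2 : n + u3 < x + t2 := by
    rw [← lt_tsub_iff_left]
    exact hu3r.trans_lt (hr2.trans_le (min_le_left _ _))
  have hxq : x ≤ n + u3 := le_trans le_self_add hq1.le
  have heq3 : x + (n + u3 - x) = n + u3 := add_tsub_cancel_of_le hxq
  set t3 := n + u3 - x with ht3def
  have h13 : t1 < t3 := by
    have : x + t1 < x + t3 := by rw [heq3]; exact hq1
    exact lt_of_add_lt_add_left this
  have h32 : t3 < t2 := by
    have : x + t3 < x + t2 := by rw [heq3]; exact hq2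
    exact lt_of_add_lt_add_left this
  have ht3I : t3 ∈ I := by
    obtain ⟨z, hz, hz'⟩ := exists_lt_of_csInf_lt hne (ht1a.trans_lt h13)
    exact hI.out hz ht2 ⟨hz'.le, h32.le⟩
  have := (hcond t3 ht3I).2 h13 h32.le
  rw [heq3] at this
  exact hu3H this

lemma core (hne : I.Nonempty) (hI : I.OrdConnected) (hinf : 0 < sInf I)
    (hbdd : BddAbove I) {n x : ℝ≥0}
    (hn : ¬ NSat (shift f n) (.release φ1 φ2 I))
    (hx : NSat (shift f x) (.release φ1 φ2 I))
    (hnx : ∀ t, sInf I ≤ t → n < x + t)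
    (hlowH : ∀ w, x < w → w ≤ n → ¬ NSat (shift f w) φ1)
    (hcontra : x + sInf I < n + sInf (Bad f φ2 I n))
    (hb : n + sInf (Bad f φ2 I n) < x + sSup I) : False := by
  set σ := sInf (Bad f φ2 I n) with hσdef
  have badne := bad_nonempty (φ1 := φ1) hn
  have getBad : ∀ c : ℝ≥0, n + σ < c → ∃ s1 ∈ Bad f φ2 I n, n + s1 < c := by
    intro c hc
    have : σ < c - n := lt_tsub_iff_left.mpr hc
    obtain ⟨s1, hs1, hs1'⟩ := exists_lt_of_csInf_lt badne this
    exact ⟨s1, hs1, lt_tsub_iff_left.mp hs1'⟩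
  have hlow_of : ∀ s1 ∈ Bad f φ2 I n, x + sInf I < n + s1 := by
    intro s1 hs1
    exact hcontra.trans_le ((add_le_add_iff_left n).mpr (csInf_le (OrderBot.bddBelow _) hs1))
  rcases (nsat_release_iff f φ1 φ2 I x).mp hx with hA | ⟨t1, ht1pos, hH, hpre⟩ |
    ⟨t1, ht1m, t2, ht2, hlt, hcond⟩
  · -- case A
    obtain ⟨s1, hs1, hs1b⟩ := getBad (x + sSup I) hb
    obtain ⟨s', hs', _, heq⟩ := mem_shift hne hI hs1.1 (hlow_of s1 hs1) hs1b
    exact hs1.2 (heq ▸ hA s' hs')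
  · -- case B
    have hxw : x < x + t1 := lt_add_of_pos_right x ht1pos
    have hnw : n < x + t1 := by
      by_contra h
      push_neg at h
      exact hlowH _ hxw h hH
    rcases lt_trichotomy (x + t1) (n + σ) with h | h | h
    · obtain ⟨u, hu, hule⟩ := notB_fact hn hnw hH
      have h2 : n + σ ≤ n + u := (add_le_add_iff_left n).mpr (csInf_le (OrderBot.bddBelow _) hu)
      exact absurd ((h2.trans hule).trans_lt h) (lt_irrefl _)
    · obtain ⟨u, hu, hule⟩ := notB_fact hn hnw hH
      have huσ : u = σ := le_antisymm ((add_le_add_iff_left n).mp (hule.trans_eq h))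
        (csInf_le (OrderBot.bddBelow _) hu)
      have hσBad : σ ∈ Bad f φ2 I n := huσ ▸ hu
      obtain ⟨s', hs', has', heq⟩ := mem_shift hne hI hσBad.1 hcontra hb
      have hle : s' ≤ t1 := by
        have : x + s' ≤ x + t1 := by rw [heq, ← h]
        exact le_of_add_le_add_left this
      have := hpre s' ⟨⟨hinf.trans has', hle⟩, hs'⟩
      rw [heq] at this
      exact hσBad.2 this
    · obtain ⟨s1, hs1, hs1lt⟩ := getBad (min (x + t1) (x + sSup I)) (lt_min h hb)
      obtain ⟨s', hs', has', heq⟩ := mem_shift hne hI hs1.1 (hlow_of s1 hs1)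
        (hs1lt.trans_le (min_le_right _ _))
      have hle : s' < t1 := by
        have : x + s' < x + t1 := by rw [heq]; exact hs1lt.trans_le (min_le_left _ _)
        exact lt_of_add_lt_add_left this
      have := hpre s' ⟨⟨hinf.trans has', hle.le⟩, hs'⟩
      rw [heq] at this
      exact hs1.2 this
  · -- case C
    have ht1a : sInf I ≤ t1 := by
      rcases ht1m with h | h
      · exact csInf_le (OrderBot.bddBelow I) h
      · exact le_of_eq (mem_singleton_iff.mp h).symm
    have ht2a : sInf I ≤ t2 := csInf_le (OrderBot.bddBelow I) ht2
    have hnu1 : n < x + t1 := hnx t1 ht1a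
    have hnu2 : n < x + t2 := hnx t2 ht2a
    have hHu2 : NSat (shift f (x + t2)) φ1 := (hcond t2 ht2).2 hlt le_rfl
    have step1 : n + σ ≤ x + t2 := by
      by_contra h
      push_neg at h
      obtain ⟨u, hu, hule⟩ := notB_fact hn hnu2 hHu2
      have h2 : n + σ ≤ n + u := (add_le_add_iff_left n).mpr (csInf_le (OrderBot.bddBelow _) hu)
      exact absurd ((h2.trans hule).trans_lt h) (lt_irrefl _)
    have step2 : n + σ ≤ x + t1 := by
      by_contra h
      push_neg at h
      obtain ⟨v, hv1, hv2⟩ := exists_between h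
      have hxv : x ≤ v := le_self_add.trans hv1.le
      have heqv : x + (v - x) = v := add_tsub_cancel_of_le hxv
      set t3 := v - x with ht3def
      have h13 : t1 < t3 := by
        have : x + t1 < x + t3 := by rw [heqv]; exact hv1
        exact lt_of_add_lt_add_left this
      have h32 : t3 ≤ t2 := by
        have : x + t3 ≤ x + t2 := by rw [heqv]; exact (hv2.trans_le step1).le
        exact le_of_add_le_add_left this
      have ht3I : t3 ∈ I := by
        obtain ⟨z, hz, hz'⟩ := exists_lt_of_csInf_lt hne (ht1a.trans_lt h13)
        exact hI.out hz ht2 ⟨hz'.le, h32⟩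
      have hHv := (hcond t3 ht3I).2 h13 h32
      rw [heqv] at hHv
      obtain ⟨u, hu, hule⟩ := notB_fact hn (hnu1.trans hv1) hHv
      have h2 : n + σ ≤ n + u := (add_le_add_iff_left n).mpr (csInf_le (OrderBot.bddBelow _) hu)
      exact absurd ((h2.trans hule).trans_lt hv2) (lt_irrefl _)
    rcases eq_or_lt_of_le step2 with h | h
    · by_cases hσB : σ ∈ Bad f φ2 I n
      · obtain ⟨s', hs', has', heq⟩ := mem_shift hne hI hσB.1 hcontra hb
        have hle : s' ≤ t1 := by
          have : x + s' ≤ x + t1 := by rw [heq, ← h]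
          exact le_of_add_le_add_left this
        have := (hcond s' hs').1 hle
        rw [heq] at this
        exact hσB.2 this
      · exact C_endgame hne hI hinf hbdd hn hσB ht1a ht2 hlt h.symm hcond
    · obtain ⟨s1, hs1, hs1lt⟩ := getBad (min (x + t1) (x + sSup I)) (lt_min h hb)
      obtain ⟨s', hs', has', heq⟩ := mem_shift hne hI hs1.1 (hlow_of s1 hs1)
        (hs1lt.trans_le (min_le_right _ _))
      have hle : s' ≤ t1 := by
        have : x + s' < x + t1 := by rw [heq]; exact hs1lt.trans_le (min_le_left _ _)
        exact (lt_of_add_lt_add_left this).le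
      have := (hcond s' hs').1 hle
      rw [heq] at this
      exact hs1.2 this


lemma key1 (hne : I.Nonempty) (hI : I.OrdConnected) (hinf : 0 < sInf I)
    (hbdd : BddAbove I) {n x : ℝ≥0}
    (hn : ¬ NSat (shift f n) (.release φ1 φ2 I))
    (hx : NSat (shift f x) (.release φ1 φ2 I)) (hnx : n < x) :
    n + sInf (Bad f φ2 I n) ≤ x + sInf I := by
  by_contra h
  push_neg at h
  have hσb : sInf (Bad f φ2 I n) ≤ sSup I := by
    obtain ⟨sb, hsb⟩ := bad_nonempty (φ1 := φ1) hn
    exact (csInf_le (OrderBot.bddBelow _) hsb).trans (le_csSup hbdd hsb.1)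
  exact core hne hI hinf hbdd hn hx (fun t _ => hnx.trans_le le_self_add)
    (fun w hxw hwn _ => absurd (hxw.trans_le hwn) (not_lt.mpr hnx.le)) h
    (add_lt_add_of_lt_of_le hnx hσb)

lemma key2 (hne : I.Nonempty) (hI : I.OrdConnected) (hinf : 0 < sInf I)
    (hbdd : BddAbove I) {n x : ℝ≥0}
    (hn : ¬ NSat (shift f n) (.release φ1 φ2 I))
    (hx : NSat (shift f x) (.release φ1 φ2 I)) (hxn : x < n) (hna : n < sInf I) :
    x + sSup I ≤ n + sInf (Bad f φ2 I n) ∨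
      ∃ w, x < w ∧ w ≤ n ∧ NSat (shift f w) φ1 := by
  by_contra h
  push_neg at h
  obtain ⟨h1, h2⟩ := h
  exact core hne hI hinf hbdd hn hx
    (fun t ht => (hna.trans_le ht).trans_le le_add_self)
    h2
    (((add_lt_add_iff_right _).mpr hxn).trans_le ((add_le_add_iff_left n).mpr (inf_le_sInf_bad hn)))
    h1

end Facts

lemma step_le_sInf (I : Set ℝ≥0) : Step I ≤ sInf I := by
  unfold Step
  split_ifs with h
  · exact h.le
  · exact le_rfl

lemma step_add_sInf_le_sSup {I : Set ℝ≥0} (hne : I.Nonempty) (hbdd : BddAbove I) :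
    Step I + sInf I ≤ sSup I := by
  have hab : sInf I ≤ sSup I := (csInf_le (OrderBot.bddBelow I) hne.some_mem).trans (le_csSup hbdd hne.some_mem)
  unfold Step
  split_ifs with h
  · rw [tsub_add_cancel_of_le hab]
  · push_neg at h
    calc sInf I + sInf I ≤ (sSup I - sInf I) + sInf I := (add_le_add_iff_right _).mpr h
    _ = sSup I := tsub_add_cancel_of_le hab

lemma no_pattern {f : Signal AP} {φ1 φ2 : MTL AP} {I : Set ℝ≥0}
    (hI : I.OrdConnected) (hne : I.Nonempty) (hinf : 0 < sInf I) (hbdd : BddAbove I)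
    {n1 x2 n2 x3 : ℝ≥0}
    (o1 : n1 < x2) (o2 : x2 < n2) (o3 : n2 < x3) (hx3 : x3 < Step I)
    (hX2 : NSat (shift f x2) (.release φ1 φ2 I))
    (hX3 : NSat (shift f x3) (.release φ1 φ2 I))
    (hN1 : ¬ NSat (shift f n1) (.release φ1 φ2 I))
    (hN2 : ¬ NSat (shift f n2) (.release φ1 φ2 I)) : False := by
  have hstep_a : Step I ≤ sInf I := step_le_sInf I
  have hstep_b : Step I + sInf I ≤ sSup I := step_add_sInf_le_sSup hne hbdd
  have hn2a : n2 < sInf I := (o3.trans hx3).trans_le hstep_a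
  rcases key2 hne hI hinf hbdd hN2 hX2 o2 hn2a with hcase | ⟨w, hw1, hw2, hwH⟩
  · have hk1 := key1 hne hI hinf hbdd hN2 hX3 o3
    have h2 : x2 + (Step I + sInf I) ≤ x3 + sInf I :=
      le_trans ((add_le_add_iff_left x2).mpr hstep_b) (hcase.trans hk1)
    have h3 : (x2 + Step I) + sInf I ≤ x3 + sInf I := by rwa [add_assoc]
    have h4 : x2 + Step I ≤ x3 := le_of_add_le_add_right h3
    exact absurd (h4.trans_lt hx3) (not_lt.mpr le_add_self)
  · obtain ⟨u, hu, hule⟩ := notB_fact hN1 (o1.trans hw1) hwH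
    have hau : sInf I ≤ u := csInf_le (OrderBot.bddBelow I) hu.1
    have : n1 + u < n1 + u :=
      hule.trans_lt (((hw2.trans_lt hn2a).trans_le hau).trans_le le_add_self)
    exact absurd this (lt_irrefl _)



theorem release_finitely_variable (f : Signal AP) (φ1 φ2 : MTL AP)
    (I : Set ℝ≥0) (hI : I.OrdConnected) (hne : I.Nonempty)
    (hinf : 0 < sInf I) (hbdd : BddAbove I) :
    ∃ T : Fin 4 → Set ℝ≥0,
      (∀ i, (T i).OrdConnected) ∧
      (∀ i j, i < j → ∀ ti ∈ T i, ∀ tj ∈ T j, ti < tj) ∧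
      ∀ t : ℝ≥0,
        (t < Step I ∧ NSat (shift f t) (.release φ1 φ2 I)) ↔
          t ∈ T 0 ∪ T 1 ∪ T 2 ∪ T 3 := by
  classical
  set S : Set ℝ≥0 := {t | t < Step I ∧ NSat (shift f t) (.release φ1 φ2 I)} with hSdef
  have hpat : ∀ n1 x2 n2 x3 : ℝ≥0, n1 < x2 → x2 < n2 → n2 < x3 →
      x2 ∈ S → x3 ∈ S → n1 ∉ S → n2 ∉ S → False := by
    intro n1 x2 n2 x3 o1 o2 o3 hx2 hx3 hn1 hn2
    have hn1' : ¬ NSat (shift f n1) (.release φ1 φ2 I) :=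
      fun h => hn1 ⟨o1.trans hx2.1, h⟩
    have hn2' : ¬ NSat (shift f n2) (.release φ1 φ2 I) :=
      fun h => hn2 ⟨o3.trans hx3.1, h⟩
    exact no_pattern hI hne hinf hbdd o1 o2 o3 hx3.1 hx2.2 hx3.2 hn1' hn2'
  set m0 := sInf S with hm0
  set T0 : Set ℝ≥0 := {t | t ∈ S ∧ m0 ≤ t ∧ Set.Ioc m0 t ⊆ S} with hT0
  set m1 := sInf (S \ T0) with hm1
  set T1 : Set ℝ≥0 := {t | t ∈ S ∧ t ∉ T0 ∧ m1 ≤ t ∧ Set.Ioc m1 t ⊆ S} with hT1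
  have hT0dc : ∀ s ∈ S, ∀ t ∈ T0, s ≤ t → s ∈ T0 := by
    intro s hs t ht hst
    exact ⟨hs, csInf_le (OrderBot.bddBelow S) hs, fun u hu => ht.2.2 ⟨hu.1, hu.2.trans hst⟩⟩
  have hT0oc : T0.OrdConnected := by
    constructor
    intro t1 h1 t2 h2 z hz
    have hzS : z ∈ S := by
      rcases eq_or_lt_of_le (h1.2.1.trans hz.1) with he | hlt
      · exact (le_antisymm (he ▸ h1.2.1) hz.1) ▸ h1.1
      · exact h2.2.2 ⟨hlt, hz.2⟩
    exact ⟨hzS, h1.2.1.trans hz.1, fun u hu => h2.2.2 ⟨hu.1, hu.2.trans hz.2⟩⟩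
  have hT01 : ∀ t ∈ T0, ∀ t' ∈ T1, t < t' := by
    intro t ht t' ht'
    by_contra hle
    push_neg at hle
    exact ht'.2.1 (hT0dc t' ht'.1 t ht hle)
  have hT1oc : T1.OrdConnected := by
    constructor
    intro t1 h1 t2 h2 z hz
    have hzS : z ∈ S := by
      rcases eq_or_lt_of_le (h1.2.2.1.trans hz.1) with he | hlt
      · exact (le_antisymm (he ▸ h1.2.2.1) hz.1) ▸ h1.1
      · exact h2.2.2.2 ⟨hlt, hz.2⟩
    exact ⟨hzS, fun hzT0 => h1.2.1 (hT0dc t1 h1.1 z hzT0 hz.1), h1.2.2.1.trans hz.1,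
      fun u hu => h2.2.2.2 ⟨hu.1, hu.2.trans hz.2⟩⟩
  have hcover : ∀ t ∈ S, t ∈ T0 ∨ t ∈ T1 := by
    intro t ht
    by_contra hc
    push_neg at hc
    obtain ⟨hc0, hc1⟩ := hc
    have htm1 : t ∈ S \ T0 := ⟨ht, hc0⟩
    have hm1t : m1 ≤ t := csInf_le (OrderBot.bddBelow _) htm1
    have h2 : ∃ n2, n2 ∈ Set.Ioc m1 t ∧ n2 ∉ S := by
      by_contra hno
      push_neg at hno
      exact hc1 ⟨ht, hc0, hm1t, fun u hu => hno u hu⟩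
    obtain ⟨n2, hn2m, hn2S⟩ := h2
    have hn2t : n2 < t := lt_of_le_of_ne hn2m.2 (fun h => hn2S (h ▸ ht))
    obtain ⟨x2, hx2m, hx2lt⟩ := exists_lt_of_csInf_lt ⟨t, htm1⟩ hn2m.1
    have hm0x2 : m0 ≤ x2 := csInf_le (OrderBot.bddBelow S) hx2m.1
    have h3 : ∃ n1, n1 ∈ Set.Ioc m0 x2 ∧ n1 ∉ S := by
      by_contra hno
      push_neg at hno
      exact hx2m.2 ⟨hx2m.1, hm0x2, fun u hu => hno u hu⟩
    obtain ⟨n1, hn1m, hn1S⟩ := h3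
    have hn1x2 : n1 < x2 := lt_of_le_of_ne hn1m.2 (fun h => hn1S (h ▸ hx2m.1))
    exact hpat n1 x2 n2 t hn1x2 hx2lt hn2t hx2m.1 ht hn1S hn2S
  refine ⟨![T0, T1, ∅, ∅], ?_, ?_, ?_⟩
  · intro i
    fin_cases i
    · exact hT0oc
    · exact hT1oc
    · exact Set.ordConnected_empty
    · exact Set.ordConnected_empty
  · intro i j hij ti hti tj htj
    fin_cases i <;> fin_cases j <;>
      first
        | exact absurd hij (by decide)
        | exact absurd htj (Set.notMem_empty tj)
        | exact absurd hti (Set.notMem_empty ti)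
        | exact hT01 _ hti _ htj
  · intro t
    constructor
    · intro ht
      rcases hcover t ht with h | h
      · exact Or.inl (Or.inl (Or.inl h))
      · exact Or.inl (Or.inl (Or.inr h))
    · intro ht
      rcases ht with ((h | h) | h) | h
      · exact h.1
      · exact h.1
      · exact absurd h (Set.notMem_empty t)
      · exact absurd h (Set.notMem_empty t)

end MITL
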